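/- Let Σ be the fan of a complete toric variety admitting an additive action, with primitive ray generators p_1,...,p_n forming a basis of N and p_j = -Σ_i α_{ji} p_i for j > n with all α_{ji} ≥ 0. Then for each 1 ≤ i ≤ n, the set R_i of Demazure roots with distinguished ray ρ_i is contained in -p_i^* + Σ_{l≠i} Z_{≥0} p_l^*, and the vector -p_i^* belongs to R_i. -/

import Mathlib

/-- `e ∈ M` is a Demazure root of the fan with primitive ray generators
`p_1,…,p_m`, with distinguished ray `ρ`. -/
def IsDemazureRoot {n m : ℕ} (p : Fin m → (Fin n → ℤ)) (ρ : Fin m)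
    (e : Fin n → ℤ) : Prop :=
  dotProduct (p ρ) e = -1 ∧
  ∀ ρ' : Fin m, ρ' ≠ ρ → 0 ≤ dotProduct (p ρ') e


private theorem dot_dual_lemma {n : ℕ} (f : (Fin n → ℤ) →ₗ[ℤ] ℤ) (v : Fin n → ℤ) :
    dotProduct v (fun k => f (fun j => if k = j then 1 else 0)) = f v := by
  rw [LinearMap.pi_apply_eq_sum_univ f v, dotProduct]
  simp [smul_eq_mul]

/-- Let `Σ` be the fan of a complete toric variety admitting an additive
action: the primitive ray generators `p_1,…,p_n` form a basis `B` of `N` and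
`p_j = -∑_i α_{ji} p_i` with all `α_{ji} ≥ 0` for `j > n`.  Then for each
`1 ≤ i ≤ n` the set `R_i` of Demazure roots with distinguished ray `ρ_i` is
contained in `-p_i^* + ∑_{l ≠ i} ℤ_{≥0} p_l^*` (i.e. every such root `e`
satisfies `⟨p_i, e⟩ = -1` and `⟨p_l, e⟩ ≥ 0` for `l ≠ i`), and the vector
`-p_i^*` (characterized by `⟨p_l, -p_i^*⟩ = -δ_{li}`) belongs to `R_i`. -/
theorem roots_structure_of_additive_action_fan
    {n m : ℕ} (hnm : n ≤ m) (p : Fin m → (Fin n → ℤ))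
    (hp : Function.Injective p)
    (B : Module.Basis (Fin n) ℤ (Fin n → ℤ))
    (hB : ∀ i : Fin n, B i = p (Fin.castLE hnm i))
    (hα : ∀ j : Fin m, n ≤ (j : ℕ) → ∀ i : Fin n, B.repr (p j) i ≤ 0)
    (i : Fin n) :
    (∀ e : Fin n → ℤ, IsDemazureRoot p (Fin.castLE hnm i) e →
      (dotProduct (B i) e = -1 ∧
        ∀ l : Fin n, l ≠ i → 0 ≤ dotProduct (B l) e)) ∧
    (∃ e : Fin n → ℤ,
      (∀ l : Fin n, dotProduct (B l) e = if l = i then -1 else 0) ∧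
      IsDemazureRoot p (Fin.castLE hnm i) e) := by
  classical
  constructor
  · intro e he
    refine ⟨by rw [hB i]; exact he.1, fun l hl => ?_⟩
    rw [hB l]
    exact he.2 _ (fun h => hl (Fin.castLE_injective hnm h))
  · set f : (Fin n → ℤ) →ₗ[ℤ] ℤ := -(B.coord i) with hf
    refine ⟨fun k => f (fun j => if k = j then 1 else 0), ?_, ?_, ?_⟩
    · intro l
      rw [dot_dual_lemma f (B l)]
      simp [hf, Module.Basis.coord_apply, Finsupp.single_apply]
      split <;> simp_all [eq_comm]
    · rw [← hB i, dot_dual_lemma f (B i)]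
      simp [hf, Module.Basis.coord_apply]
    · intro ρ' hρ'
      rw [dot_dual_lemma f (p ρ')]
      by_cases hlt : (ρ' : ℕ) < n
      · have : p ρ' = B ⟨ρ', hlt⟩ := by
          rw [hB ⟨ρ', hlt⟩]; congr 1
        rw [this]
        have hne : (⟨ρ', hlt⟩ : Fin n) ≠ i := by
          intro h; apply hρ'; ext; simpa using congrArg (Fin.val) h
        simp [hf, Module.Basis.coord_apply, Finsupp.single_apply, hne]
      · have := hα ρ' (le_of_not_gt hlt) i
        simp [hf, Module.Basis.coord_apply]
        linarith
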